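/- Let v:ℝ⁴→ℝ be continuous with v ≥ 0 and ∫_{ℝ⁴} v(x)⁴ dx < ∞. Define α = (1/(8π²))∫_{ℝ⁴} v(y)⁴ dy and q(x) = (1/(8π²))∫_{ℝ⁴} ln(|x−y|/|y|)·v(y)⁴ dy. Then there exists a constant C such that q(x) ≤ α·ln|x| + C for all x∈ℝ⁴ with |x| ≥ 2. -/

import Mathlib

open MeasureTheory Real Filter
open Metric


lemma neg_log_integrableOn_closedBall :
    IntegrableOn (fun y : EuclideanSpace ℝ (Fin 4) => -Real.log ‖y‖)
      (Metric.closedBall 0 1) volume := by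
  have hmeas : Measurable (fun y : EuclideanSpace ℝ (Fin 4) => -Real.log ‖y‖) :=
    (Real.measurable_log.comp measurable_norm).neg
  have hnn : 0 ≤ᵐ[volume.restrict (Metric.closedBall (0 : EuclideanSpace ℝ (Fin 4)) 1)]
      (fun y : EuclideanSpace ℝ (Fin 4) => -Real.log ‖y‖) := by
    filter_upwards [ae_restrict_mem measurableSet_closedBall] with y hy
    simp only [mem_closedBall, dist_zero_right] at hy
    have : Real.log ‖y‖ ≤ 0 := Real.log_nonpos (norm_nonneg _) hy
    simp only [Pi.zero_apply]
    linarith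
  refine ⟨hmeas.aestronglyMeasurable.restrict, ?_⟩
  rw [hasFiniteIntegral_iff_ofReal hnn]
  rw [lintegral_eq_lintegral_meas_le _ hnn hmeas.aemeasurable.restrict]
  set K := volume (Metric.ball (0 : EuclideanSpace ℝ (Fin 4)) 1) with hK
  have hKlt : K < ⊤ := measure_ball_lt_top
  calc ∫⁻ t in Set.Ioi (0:ℝ),
        (volume.restrict (Metric.closedBall (0 : EuclideanSpace ℝ (Fin 4)) 1))
          {a | t ≤ -Real.log ‖a‖}
      ≤ ∫⁻ t in Set.Ioi (0:ℝ), ENNReal.ofReal (Real.exp (-t) ^ 4) * K := by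
        refine lintegral_mono_ae ?_
        filter_upwards [ae_restrict_mem measurableSet_Ioi] with t ht
        rw [Measure.restrict_apply' measurableSet_closedBall]
        have hsub : {a : EuclideanSpace ℝ (Fin 4) | t ≤ -Real.log ‖a‖} ∩
            Metric.closedBall 0 1 ⊆ Metric.closedBall 0 (Real.exp (-t)) := by
          rintro y ⟨hy1, _⟩
          simp only [Set.mem_setOf_eq] at hy1
          simp only [mem_closedBall, dist_zero_right]
          rcases eq_or_lt_of_le (norm_nonneg y) with h0 | h0
          · rw [← h0]; exact (Real.exp_pos _).le
          · have : Real.log ‖y‖ ≤ -t := by linarith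
            calc ‖y‖ = Real.exp (Real.log ‖y‖) := (Real.exp_log h0).symm
              _ ≤ Real.exp (-t) := Real.exp_le_exp.2 this
        calc volume ({a : EuclideanSpace ℝ (Fin 4) | t ≤ -Real.log ‖a‖} ∩
              Metric.closedBall 0 1)
            ≤ volume (Metric.closedBall (0 : EuclideanSpace ℝ (Fin 4)) (Real.exp (-t))) :=
              measure_mono hsub
          _ = ENNReal.ofReal (Real.exp (-t) ^
                Module.finrank ℝ (EuclideanSpace ℝ (Fin 4))) * K := by
              rw [Measure.addHaar_closedBall _ _ (Real.exp_pos _).le, hK]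
          _ = ENNReal.ofReal (Real.exp (-t) ^ 4) * K := by
              norm_num [finrank_euclideanSpace]
    _ = (∫⁻ t in Set.Ioi (0:ℝ), ENNReal.ofReal (Real.exp (-t) ^ 4)) * K :=
        lintegral_mul_const'' _ ((ENNReal.measurable_ofReal.comp
          ((Real.measurable_exp.comp measurable_neg).pow_const 4)).aemeasurable.restrict)
    _ < ⊤ := by
        refine ENNReal.mul_lt_top ?_ hKlt
        have hint : IntegrableOn (fun t : ℝ => Real.exp (-4 * t)) (Set.Ioi (0:ℝ)) :=
          exp_neg_integrableOn_Ioi 0 (by norm_num)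
        have heq : ∀ t : ℝ, Real.exp (-t) ^ 4 = Real.exp (-4 * t) := by
          intro t
          rw [← Real.exp_nat_mul]
          ring_nf
        have h2 := hint.2
        rw [hasFiniteIntegral_iff_ofReal (by
          filter_upwards with t using (Real.exp_pos _).le)] at h2
        calc ∫⁻ t in Set.Ioi (0:ℝ), ENNReal.ofReal (Real.exp (-t) ^ 4)
            = ∫⁻ t in Set.Ioi (0:ℝ), ENNReal.ofReal (Real.exp (-4 * t)) := by
              refine lintegral_congr fun t => ?_
              rw [heq t]
          _ < ⊤ := h2

lemma log_ratio_nonneg (r : ℝ) (hr : 0 ≤ r) : 0 ≤ Real.log ((1 + r) / r) := by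
  rcases eq_or_lt_of_le hr with h0 | h0
  · rw [← h0, div_zero, Real.log_zero]
  · exact Real.log_nonneg ((one_le_div h0).2 (by linarith))

lemma H_integrable (v : EuclideanSpace ℝ (Fin 4) → ℝ)
    (hv_cont : Continuous v) (hv_nonneg : ∀ x, 0 ≤ v x)
    (hv4 : Integrable (fun x => v x ^ 4)) :
    Integrable (fun y : EuclideanSpace ℝ (Fin 4) =>
      Real.log ((1 + ‖y‖) / ‖y‖) * v y ^ 4) := by
  have hmeasH : Measurable (fun y : EuclideanSpace ℝ (Fin 4) =>
      Real.log ((1 + ‖y‖) / ‖y‖) * v y ^ 4) :=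
    (Real.measurable_log.comp ((measurable_const.add measurable_norm).div
      measurable_norm)).mul (hv_cont.measurable.pow_const 4)
  have hHnn : ∀ y : EuclideanSpace ℝ (Fin 4),
      0 ≤ Real.log ((1 + ‖y‖) / ‖y‖) * v y ^ 4 := fun y =>
    mul_nonneg (log_ratio_nonneg _ (norm_nonneg _)) (by positivity)
  obtain ⟨M, hM⟩ := (isCompact_closedBall (0 : EuclideanSpace ℝ (Fin 4)) 1
    ).exists_bound_of_continuousOn ((hv_cont.pow 4).continuousOn)
  have hMnn : 0 ≤ M := le_trans (norm_nonneg _)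
    (hM 0 (mem_closedBall_self zero_le_one))
  have hin : IntegrableOn (fun y : EuclideanSpace ℝ (Fin 4) =>
      Real.log ((1 + ‖y‖) / ‖y‖) * v y ^ 4) (Metric.closedBall 0 1) volume := by
    have hbd : IntegrableOn (fun y : EuclideanSpace ℝ (Fin 4) =>
        M * (Real.log 2 + -Real.log ‖y‖)) (Metric.closedBall 0 1) volume := by
      refine Integrable.const_mul ?_ M
      exact (integrableOn_const measure_closedBall_lt_top.ne).add
        neg_log_integrableOn_closedBall
    refine Integrable.mono hbd hmeasH.aestronglyMeasurable.restrict ?_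
    filter_upwards [ae_restrict_mem measurableSet_closedBall] with y hy
    simp only [mem_closedBall, dist_zero_right] at hy
    have hlogy : Real.log ‖y‖ ≤ 0 := Real.log_nonpos (norm_nonneg _) hy
    have hvM : v y ^ 4 ≤ M := le_trans (le_abs_self _)
      (hM y (by simpa [mem_closedBall, dist_zero_right] using hy))
    have hvnn : (0:ℝ) ≤ v y ^ 4 := by positivity
    have hlog_le : Real.log ((1 + ‖y‖) / ‖y‖) ≤ Real.log 2 + -Real.log ‖y‖ := by
      rcases eq_or_lt_of_le (norm_nonneg y) with h0 | h0
      · rw [← h0]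
        simp only [div_zero, Real.log_zero, neg_zero, add_zero]
        exact Real.log_nonneg one_le_two
      · have h1 : (1 + ‖y‖) / ‖y‖ ≤ 2 / ‖y‖ := by
          gcongr
          linarith
        calc Real.log ((1 + ‖y‖) / ‖y‖) ≤ Real.log (2 / ‖y‖) :=
              Real.log_le_log (div_pos (by linarith) h0) h1
          _ = Real.log 2 + -Real.log ‖y‖ := by
              rw [Real.log_div two_ne_zero (ne_of_gt h0)]; ring
    rw [Real.norm_eq_abs, abs_of_nonneg (hHnn y)]
    calc Real.log ((1 + ‖y‖) / ‖y‖) * v y ^ 4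
        ≤ (Real.log 2 + -Real.log ‖y‖) * v y ^ 4 :=
          mul_le_mul_of_nonneg_right hlog_le hvnn
      _ ≤ (Real.log 2 + -Real.log ‖y‖) * M := by
          refine mul_le_mul_of_nonneg_left hvM ?_
          have := Real.log_nonneg (by norm_num : (1:ℝ) ≤ 2)
          linarith
      _ = M * (Real.log 2 + -Real.log ‖y‖) := mul_comm _ _
      _ ≤ ‖M * (Real.log 2 + -Real.log ‖y‖)‖ := le_abs_self _
  have hout : IntegrableOn (fun y : EuclideanSpace ℝ (Fin 4) =>
      Real.log ((1 + ‖y‖) / ‖y‖) * v y ^ 4)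
      (Metric.closedBall 0 1)ᶜ volume := by
    refine Integrable.mono ((hv4.const_mul (Real.log 2)).integrableOn)
      hmeasH.aestronglyMeasurable.restrict ?_
    filter_upwards [ae_restrict_mem measurableSet_closedBall.compl] with y hy
    simp only [Set.mem_compl_iff, mem_closedBall, dist_zero_right, not_le] at hy
    have h0 : (0:ℝ) < ‖y‖ := lt_trans zero_lt_one hy
    have hlog_le : Real.log ((1 + ‖y‖) / ‖y‖) ≤ Real.log 2 := by
      refine Real.log_le_log (div_pos (by linarith) h0) ?_
      rw [div_le_iff₀ h0]
      linarith
    have hvnn : (0:ℝ) ≤ v y ^ 4 := by positivity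
    rw [Real.norm_eq_abs, abs_of_nonneg (hHnn y)]
    calc Real.log ((1 + ‖y‖) / ‖y‖) * v y ^ 4
        ≤ Real.log 2 * v y ^ 4 := mul_le_mul_of_nonneg_right hlog_le hvnn
      _ ≤ ‖Real.log 2 * v y ^ 4‖ := le_abs_self _
  have := hin.union hout
  rwa [Set.union_compl_self, integrableOn_univ] at this

/-- Lemma 3.3: upper bound `q(x) ≤ α ln|x| + C` for the logarithmic potential
`q(x) = (1/(8π²)) ∫ ln(|x-y|/|y|) v(y)⁴ dy` with total curvature
`α = (1/(8π²)) ∫ v⁴`. -/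
theorem log_potential_upper_bound_4d
    (v : EuclideanSpace ℝ (Fin 4) → ℝ)
    (hv_cont : Continuous v) (hv_nonneg : ∀ x, 0 ≤ v x)
    (hv4 : Integrable (fun x => v x ^ 4)) :
    ∃ C : ℝ, ∀ x : EuclideanSpace ℝ (Fin 4), 2 ≤ ‖x‖ →
      (1 / (8 * π ^ 2)) * ∫ y, Real.log (‖x - y‖ / ‖y‖) * v y ^ 4 ≤
        ((1 / (8 * π ^ 2)) * ∫ y, v y ^ 4) * Real.log ‖x‖ + C := by
  have hc : (0:ℝ) < 1 / (8 * π ^ 2) := by positivity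
  have HInt := H_integrable v hv_cont hv_nonneg hv4
  set H : EuclideanSpace ℝ (Fin 4) → ℝ :=
    fun y => Real.log ((1 + ‖y‖) / ‖y‖) * v y ^ 4 with hHdef
  have hHnn : 0 ≤ ∫ y, H y := integral_nonneg fun y =>
    mul_nonneg (log_ratio_nonneg _ (norm_nonneg _)) (by positivity)
  have hαnn : 0 ≤ ∫ y, v y ^ 4 := integral_nonneg fun y => by positivity
  refine ⟨(1 / (8 * π ^ 2)) * ∫ y, H y, fun x hx => ?_⟩
  have hx1 : (1:ℝ) ≤ ‖x‖ := by linarith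
  have hlogx : 0 ≤ Real.log ‖x‖ := Real.log_nonneg hx1
  have hpt : ∀ y, Real.log (‖x - y‖ / ‖y‖) * v y ^ 4 ≤
      Real.log ‖x‖ * v y ^ 4 + H y := by
    intro y
    have hvnn : (0:ℝ) ≤ v y ^ 4 := by positivity
    have hlog : Real.log (‖x - y‖ / ‖y‖) ≤
        Real.log ‖x‖ + Real.log ((1 + ‖y‖) / ‖y‖) := by
      rcases eq_or_lt_of_le (norm_nonneg y) with h0 | h0
      · rw [← h0, div_zero, Real.log_zero, div_zero, Real.log_zero, add_zero]
        exact hlogx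
      · have key : ‖x - y‖ / ‖y‖ ≤ ‖x‖ * ((1 + ‖y‖) / ‖y‖) := by
          rw [← mul_div_assoc]
          have h1 : ‖x - y‖ ≤ ‖x‖ * (1 + ‖y‖) := by
            have h2 : ‖x - y‖ ≤ ‖x‖ + ‖y‖ := norm_sub_le _ _
            have h3 : ‖y‖ ≤ ‖x‖ * ‖y‖ := le_mul_of_one_le_left (norm_nonneg _) hx1
            nlinarith
          gcongr
        rcases eq_or_lt_of_le (norm_nonneg (x - y)) with hxy | hxy
        · rw [← hxy, zero_div, Real.log_zero]
          exact add_nonneg hlogx (log_ratio_nonneg _ (norm_nonneg _))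
        · calc Real.log (‖x - y‖ / ‖y‖)
              ≤ Real.log (‖x‖ * ((1 + ‖y‖) / ‖y‖)) :=
                Real.log_le_log (div_pos hxy h0) key
            _ = Real.log ‖x‖ + Real.log ((1 + ‖y‖) / ‖y‖) :=
                Real.log_mul (by linarith) (ne_of_gt (div_pos (by linarith) h0))
    calc Real.log (‖x - y‖ / ‖y‖) * v y ^ 4
        ≤ (Real.log ‖x‖ + Real.log ((1 + ‖y‖) / ‖y‖)) * v y ^ 4 :=
          mul_le_mul_of_nonneg_right hlog hvnn
      _ = Real.log ‖x‖ * v y ^ 4 + H y := by rw [hHdef]; ring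
  have hgint : Integrable (fun y => Real.log ‖x‖ * v y ^ 4 + H y) :=
    (hv4.const_mul _).add HInt
  by_cases hf : Integrable (fun y => Real.log (‖x - y‖ / ‖y‖) * v y ^ 4)
  · have hmono := integral_mono hf hgint hpt
    rw [integral_add (hv4.const_mul _) HInt, integral_const_mul] at hmono
    have e1 : (1 / (8 * π ^ 2)) * (Real.log ‖x‖ * ∫ y, v y ^ 4) =
        ((1 / (8 * π ^ 2)) * ∫ y, v y ^ 4) * Real.log ‖x‖ := by ring
    calc (1 / (8 * π ^ 2)) * ∫ y, Real.log (‖x - y‖ / ‖y‖) * v y ^ 4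
        ≤ (1 / (8 * π ^ 2)) * ((Real.log ‖x‖ * ∫ y, v y ^ 4) + ∫ y, H y) :=
          mul_le_mul_of_nonneg_left hmono hc.le
      _ = ((1 / (8 * π ^ 2)) * ∫ y, v y ^ 4) * Real.log ‖x‖ +
          (1 / (8 * π ^ 2)) * ∫ y, H y := by rw [mul_add, e1]
  · rw [integral_undef hf, mul_zero]
    exact add_nonneg (mul_nonneg (mul_nonneg hc.le hαnn) hlogx)
      (mul_nonneg hc.le hHnn)
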